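/- Let G be a finite group acting faithfully on a set X, and suppose every element of order p (p a prime dividing |G|) fixes exactly one point of X. Let S_p be a Sylow p-subgroup of G and let ζ be a nontrivial element of the center of S_p. Then every element of S_p fixes the unique fixed point of ζ; in particular all nontrivial elements of S_p have the same unique fixed point. -/

import Mathlib

/-- If every element of order `p` of a finite group `G` acting faithfully on `X`
has exactly one fixed point, and `ζ` is a nontrivial central element of a Sylow
`p`-subgroup `S_p`, then every element of `S_p` fixes the (unique) fixed point of `ζ`. -/
theorem stmt_1 (p : ℕ) [Fact p.Prime] (G : Type*) [Group G] [Finite G]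
    (X : Type*) [MulAction G X] [FaithfulSMul G X]
    (hpdvd : p ∣ Nat.card G)
    (hfix : ∀ g : G, orderOf g = p → ∃! x : X, g • x = x)
    (Sp : Sylow p G) (ζ : G) (hζS : ζ ∈ (Sp : Subgroup G)) (hζ1 : ζ ≠ 1)
    (hζcentral : ∀ s ∈ (Sp : Subgroup G), s * ζ = ζ * s) :
    (∃! x : X, ζ • x = x) ∧
      ∀ x : X, ζ • x = x → ∀ s ∈ (Sp : Subgroup G), s • x = x := by
  have hp : p.Prime := Fact.out
  -- ζ has order a power of p
  obtain ⟨m, hm⟩ := Sp.2 ⟨ζ, hζS⟩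
  have hdvd : orderOf ζ ∣ p ^ m := by
    rw [orderOf_dvd_iff_pow_eq_one]
    exact_mod_cast congrArg (Subgroup.subtype _) hm
  obtain ⟨j, hjm, hj⟩ := (Nat.dvd_prime_pow hp).mp hdvd
  have hj0 : j ≠ 0 := by
    rintro rfl
    exact hζ1 (orderOf_eq_one_iff.mp (by simpa using hj))
  set k := p ^ (j - 1) with hk
  set η := ζ ^ k with hη
  have hkp : k * p = orderOf ζ := by
    rw [hj, hk, ← pow_succ]
    congr 1
    omega
  have hηp : η ^ p = 1 := by
    rw [hη, ← pow_mul, hkp, pow_orderOf_eq_one]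
  have hη1 : η ≠ 1 := by
    intro h
    have : orderOf ζ ∣ k := orderOf_dvd_of_pow_eq_one (hη ▸ h)
    have hklt : k < orderOf ζ := by
      rw [hj, hk]
      exact Nat.pow_lt_pow_right hp.one_lt (Nat.sub_lt (Nat.pos_of_ne_zero hj0) one_pos)
    have hk0 : 0 < k := Nat.pow_pos hp.pos
    exact absurd (Nat.le_of_dvd hk0 this) (not_le.mpr hklt)
  have hηord : orderOf η = p := by
    have := orderOf_dvd_of_pow_eq_one hηp
    rcases (Nat.dvd_prime hp).mp this with h | h
    · exact absurd (orderOf_eq_one_iff.mp h) hη1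
    · exact h
  obtain ⟨x₀, hx₀, hx₀u⟩ := hfix η hηord
  -- any point fixed by ζ is fixed by η, hence equals x₀
  have hfixpow : ∀ y : X, ζ • y = y → ∀ n : ℕ, ζ ^ n • y = y := by
    intro y hy n
    induction n with
    | zero => simp
    | succ n ih => rw [pow_succ, mul_smul, hy, ih]
  -- ζ fixes x₀
  have hζx₀ : ζ • x₀ = x₀ := by
    apply hx₀u
    have hkfix : ζ ^ k • x₀ = x₀ := hx₀
    show ζ ^ k • ζ • x₀ = ζ • x₀
    rw [← mul_smul, ← ((Commute.refl ζ).pow_right k).eq, mul_smul, hkfix]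
  refine ⟨⟨x₀, hζx₀, fun y hy => hx₀u y (hfixpow y hy k)⟩, ?_⟩
  intro x hx s hs
  have hxeq : x = x₀ := hx₀u x (hfixpow x hx k)
  subst hxeq
  -- s commutes with η
  have hcomm : η * s = s * η := (Commute.pow_right (hζcentral s hs) k).symm
  apply hx₀u
  show η • s • x = s • x
  rw [← mul_smul, hcomm, mul_smul, hx₀]
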